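/- The function f(p) = ((1-p)/p)^{(1-p)/p} · e^{p - 1/p} is strictly increasing on (1/2, 1), with f(1/2) = 1/e and lim_{p→1⁻} f(p) = 1. -/

import Mathlib

open Filter Real

-- h(t) = t log t - t, continuous, strictly decreasing on [0,1]
lemma aux_h_anti : StrictAntiOn (fun t : ℝ => t * Real.log t - t) (Set.Icc 0 1) := by
  have hc : ContinuousOn (fun t : ℝ => t * Real.log t - t) (Set.Icc 0 1) :=
    (Real.continuous_mul_log.sub continuous_id).continuousOn
  apply strictAntiOn_of_deriv_neg (convex_Icc 0 1) hc
  intro t ht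
  rw [interior_Icc] at ht
  have h1 : HasDerivAt (fun t : ℝ => t * Real.log t - t) (Real.log t + 1 - 1) t :=
    (Real.hasDerivAt_mul_log (ne_of_gt ht.1)).sub (hasDerivAt_id t)
  rw [h1.deriv]
  have := Real.log_neg ht.1 ht.2
  linarith

lemma aux_eq (p : ℝ) (hp : p ∈ Set.Ioo (1/2 : ℝ) 1) :
    ((1 - p) / p) ^ ((1 - p) / p) * Real.exp (1 - 1 / p)
      = Real.exp (((1-p)/p) * Real.log ((1-p)/p) - ((1-p)/p)) := by
  obtain ⟨h1, h2⟩ := hp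
  have hp0 : 0 < p := by linarith
  have ht : 0 < (1 - p) / p := div_pos (by linarith) hp0
  rw [Real.rpow_def_of_pos ht, ← Real.exp_add]
  congr 1
  field_simp
  ring

theorem stmt_12 :
    StrictMonoOn (fun p : ℝ => ((1 - p) / p) ^ ((1 - p) / p) * Real.exp (1 - 1 / p))
        (Set.Ioo (1 / 2 : ℝ) 1) ∧
      ((1 - (1 / 2 : ℝ)) / (1 / 2)) ^ ((1 - (1 / 2 : ℝ)) / (1 / 2)) *
          Real.exp (1 - 1 / (1 / 2 : ℝ)) = 1 / Real.exp 1 ∧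
      Tendsto (fun p : ℝ => ((1 - p) / p) ^ ((1 - p) / p) * Real.exp (1 - 1 / p))
        (nhdsWithin 1 (Set.Iio 1)) (nhds 1) := by
  refine ⟨?_, ?_, ?_⟩
  · intro p hp q hq hpq
    simp only []; rw [aux_eq p hp, aux_eq q hq]
    apply Real.exp_lt_exp.2
    have hmem : ∀ r : ℝ, r ∈ Set.Ioo (1/2 : ℝ) 1 → (1 - r) / r ∈ Set.Icc (0:ℝ) 1 := by
      intro r hr
      obtain ⟨h1, h2⟩ := hr
      have hr0 : 0 < r := by linarith
      constructor
      · exact div_nonneg (by linarith) (by linarith)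
      · rw [div_le_one hr0]; linarith
    apply aux_h_anti (hmem q hq) (hmem p hp)
    have hq0 : 0 < q := by linarith [hq.1]
    have hp0 : 0 < p := by linarith [hp.1]
    rw [div_lt_div_iff₀ hq0 hp0]
    nlinarith
  · norm_num
    rw [Real.exp_neg]
  · have h1 : Tendsto (fun p : ℝ => (1 - p) / p) (nhdsWithin 1 (Set.Iio 1)) (nhds 0) := by
      have : Tendsto (fun p : ℝ => (1 - p) / p) (nhds 1) (nhds 0) := by
        have := (tendsto_id.const_sub 1).div tendsto_id (by norm_num : (1:ℝ) ≠ 0)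
        simpa [Pi.div_def] using this
      exact this.mono_left nhdsWithin_le_nhds
    have h2 : Tendsto (fun p : ℝ => Real.exp (((1-p)/p) * Real.log ((1-p)/p) - ((1-p)/p)))
        (nhdsWithin 1 (Set.Iio 1)) (nhds 1) := by
      have := ((Real.continuous_mul_log.sub continuous_id).tendsto 0).comp h1
      have h3 := Real.continuous_exp.tendsto 0
      have := h3.comp (by simpa using this)
      simpa [Function.comp_def, Pi.sub_def] using this
    apply h2.congr'
    filter_upwards [Ioo_mem_nhdsLT_of_mem (by norm_num : (1:ℝ) ∈ Set.Ioc (1/2:ℝ) 1)] with p hp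
    exact (aux_eq p hp).symm
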